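/- Let g be a finite-dimensional nilpotent associative algebra over F_q, λ ∈ g*, p an associative polarization of λ (a maximal isotropic subalgebra for B_λ with λ(p²)=0), P = 1 + p, j : g* → p* the restriction map, and L(λ) = j⁻¹(j(λ)). Then L(λ) = {Ad*(u)λ | u ∈ P}, the P-orbit of λ under the coadjoint action; in particular L(λ) is contained in the G-coadjoint orbit of λ and |L(λ)|² equals the cardinality of the coadjoint orbit of λ. -/

import Mathlib

open Unitization Module

variable {F : Type*} [Field F] [Fintype F]
  (a : Type*) [NonUnitalRing a] [Module F a] [SMulCommClass F a a] [IsScalarTower F a a]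

/-- The coadjoint action `(Ad*(g)λ)(x) = λ(g⁻¹ x g)`. -/
noncomputable def coAd (g : (Unitization F a)ˣ) (l : Module.Dual F a) : Module.Dual F a :=
  l ∘ₗ (sndHom F F a) ∘ₗ (LinearMap.mulRight F ((g : Unitization F a))) ∘ₗ
    (LinearMap.mulLeft F (((g⁻¹ : (Unitization F a)ˣ) : Unitization F a))) ∘ₗ (inrHom F F a)

notation "fst " x:max => Prod.fst (Unitization.toProd x)
notation "snd " x:max => Prod.snd (Unitization.toProd x)

section
set_option linter.unusedSectionVars false
namespace Stmt19Aux

variable {a}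

lemma coAd_apply (g : (Unitization F a)ˣ) (l : Module.Dual F a) (x : a) :
    coAd a g l x = l (snd (((g⁻¹ : (Unitization F a)ˣ) : Unitization F a) * inr x
      * (g : Unitization F a))) := by
  simp [coAd, mul_assoc]

lemma inr_snd_of_fst_eq_zero {u : Unitization F a} (h : fst u = 0) : inr (snd u) = u := by
  conv_rhs => rw [← inl_fst_add_inr_snd_eq u]
  rw [h]
  simp

lemma fst_conj (g h : Unitization F a) (x : a) : fst (g * inr x * h) = 0 := by
  simp

/-- Nilpotency of embedded elements. -/
lemma nilp (hnil : ∃ n : ℕ, 0 < n ∧ ∀ f : Fin n → a,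
      (List.ofFn (fun i => (inr (f i) : Unitization F a))).prod = 0) (x : a) :
    IsNilpotent (inr x : Unitization F a) := by
  obtain ⟨n, -, h⟩ := hnil
  refine ⟨n, ?_⟩
  have := h (fun _ => x)
  simpa [List.ofFn_const, List.prod_replicate] using this

end Stmt19Aux
end

section
set_option linter.unusedSectionVars false

variable {F : Type*} [Field F] [Fintype F]
  {a : Type*} [NonUnitalRing a] [Module F a] [SMulCommClass F a a] [IsScalarTower F a a]

open Stmt19Aux

namespace Stmt19Aux

variable (hnil : ∃ n : ℕ, 0 < n ∧ ∀ f : Fin n → a,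
      (List.ofFn (fun i => (inr (f i) : Unitization F a))).prod = 0)

/-- The unit `1 + x` for `x : a`. -/
noncomputable def mkUnit (x : a) : (Unitization F a)ˣ :=
  ((nilp hnil x).isUnit_one_add).unit

@[simp] lemma mkUnit_val (x : a) : (mkUnit hnil x : Unitization F a) = 1 + inr x :=
  IsUnit.unit_spec _

/-- `G = 1 + a` as a subgroup of units. -/
noncomputable def Ggrp : Subgroup (Unitization F a)ˣ where
  carrier := {g | fst (g : Unitization F a) = 1}
  one_mem' := by simp
  mul_mem' := by
    intro x y hx hy
    simp only [Set.mem_setOf_eq, Units.val_mul, fst_mul] at *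
    rw [hx, hy, one_mul]
  inv_mem' := by
    intro x hx
    simp only [Set.mem_setOf_eq] at *
    have : fst ((x⁻¹ : (Unitization F a)ˣ) : Unitization F a) * fst (x : Unitization F a) = 1 := by
      rw [← fst_mul, Units.inv_mul, fst_one]
    rw [hx, mul_one] at this
    exact this

end Stmt19Aux
end

section
set_option linter.unusedSectionVars false

variable {F : Type*} [Field F] [Fintype F]
  {a : Type*} [NonUnitalRing a] [Module F a] [SMulCommClass F a a] [IsScalarTower F a a]

namespace Stmt19Aux

variable (hnil : ∃ n : ℕ, 0 < n ∧ ∀ f : Fin n → a,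
      (List.ofFn (fun i => (inr (f i) : Unitization F a))).prod = 0)
variable {p : Submodule F a} (hpmul : ∀ x ∈ p, ∀ y ∈ p, x * y ∈ p)

include hpmul in
lemma pow_neg_inr_mem {x : a} (hx : x ∈ p) :
    ∀ i : ℕ, snd ((-(inr x : Unitization F a)) ^ (i + 1)) ∈ p ∧
      fst ((-(inr x : Unitization F a)) ^ (i + 1)) = 0 := by
  intro i
  induction i with
  | zero => rw [pow_one]; exact ⟨by simpa using neg_mem hx, by simp⟩
  | succ i ih =>
    rw [pow_succ]
    refine ⟨?_, by rw [fst_mul, ih.2, zero_mul]⟩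
    rw [snd_mul, ih.2]
    simpa using hpmul _ ih.1 _ (neg_mem hx)

include hnil hpmul in
lemma snd_inv_mem {g : (Unitization F a)ˣ} (h1 : fst (g : Unitization F a) = 1)
    (h2 : snd (g : Unitization F a) ∈ p) :
    snd ((g⁻¹ : (Unitization F a)ˣ) : Unitization F a) ∈ p := by
  obtain ⟨m, hm⟩ := nilp hnil (snd (g : Unitization F a))
  set t : Unitization F a := inr (snd (g : Unitization F a)) with ht
  have hg : (g : Unitization F a) = 1 + t := by
    conv_lhs => rw [← inl_fst_add_inr_snd_eq (g : Unitization F a)]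
    rw [h1, inl_one]
  set v : Unitization F a := ∑ i ∈ Finset.range m, (-t) ^ i with hv
  have hmz : (-t) ^ m = 0 := by
    rw [neg_pow, ht, hm, mul_zero]
  have hmul : (g : Unitization F a) * v = 1 := by
    have h := mul_geom_sum (-t) m
    rw [hmz, zero_sub] at h
    have e1 : (1 + t : Unitization F a) = -(-t - 1) := by rw [neg_sub, sub_neg_eq_add]
    rw [hg, e1, neg_mul, h, neg_neg]
  have hinv : ((g⁻¹ : (Unitization F a)ˣ) : Unitization F a) = v :=
    Units.inv_eq_of_mul_eq_one_right hmul
  rw [hinv, hv]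
  have hs : snd (∑ i ∈ Finset.range m, (-t) ^ i) = ∑ i ∈ Finset.range m, snd ((-t) ^ i) :=
    map_sum (sndHom F F a) _ _
  rw [hs]
  refine Submodule.sum_mem p ?_
  intro i _
  cases i with
  | zero => simp
  | succ i => exact (pow_neg_inr_mem hpmul h2 i).1

end Stmt19Aux
end

section
set_option linter.unusedSectionVars false

variable {F : Type*} [Field F] [Fintype F]
  {a : Type*} [NonUnitalRing a] [Module F a] [SMulCommClass F a a] [IsScalarTower F a a]

namespace Stmt19Aux

variable (hnil : ∃ n : ℕ, 0 < n ∧ ∀ f : Fin n → a,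
      (List.ofFn (fun i => (inr (f i) : Unitization F a))).prod = 0)
variable {p : Submodule F a} (hpmul : ∀ x ∈ p, ∀ y ∈ p, x * y ∈ p)

/-- `P = 1 + p` as a subgroup of units. -/
noncomputable def Pgrp : Subgroup (Unitization F a)ˣ where
  carrier := {g | fst (g : Unitization F a) = 1 ∧ snd (g : Unitization F a) ∈ p}
  one_mem' := by simp
  mul_mem' := by
    rintro x y ⟨hx1, hx2⟩ ⟨hy1, hy2⟩
    constructor
    · show fst ((↑(x * y) : Unitization F a)) = 1
      rw [Units.val_mul, fst_mul, hx1, hy1, one_mul]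
    · show snd ((↑(x * y) : Unitization F a)) ∈ p
      rw [Units.val_mul, snd_mul, hx1, hy1]
      simpa using add_mem (add_mem hy2 hx2) (hpmul _ hx2 _ hy2)
  inv_mem' := by
    rintro x ⟨hx1, hx2⟩
    refine ⟨?_, snd_inv_mem hnil hpmul hx1 hx2⟩
    have : fst ((x⁻¹ : (Unitization F a)ˣ) : Unitization F a) * fst (x : Unitization F a) = 1 := by
      rw [← fst_mul, Units.inv_mul, fst_one]
    rw [hx1, mul_one] at this
    exact this

lemma mem_Pgrp_iff {u : (Unitization F a)ˣ} :
    u ∈ Pgrp hnil hpmul ↔ ∃ x ∈ p, (u : Unitization F a) = 1 + inr x := by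
  constructor
  · rintro ⟨h1, h2⟩
    refine ⟨snd (u : Unitization F a), h2, ?_⟩
    conv_lhs => rw [← inl_fst_add_inr_snd_eq (u : Unitization F a)]
    rw [h1, inl_one]
  · rintro ⟨x, hx, hu⟩
    constructor
    · rw [hu]; simp
    · rw [hu]; simpa using hx

lemma mem_Ggrp_iff {u : (Unitization F a)ˣ} :
    u ∈ Ggrp (F := F) (a := a) ↔ ∃ x : a, (u : Unitization F a) = 1 + inr x := by
  constructor
  · intro h1
    refine ⟨snd (u : Unitization F a), ?_⟩
    conv_lhs => rw [← inl_fst_add_inr_snd_eq (u : Unitization F a)]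
    rw [show fst (u : Unitization F a) = 1 from h1, inl_one]
  · rintro ⟨x, hu⟩
    show fst (u : Unitization F a) = 1
    rw [hu]; simp

noncomputable instance : MulAction (Unitization F a)ˣ (Module.Dual F a) where
  smul g l := coAd a g l
  one_smul l := by
    show coAd a 1 l = l
    ext x
    rw [coAd_apply]
    simp
  mul_smul g h l := by
    show coAd a (g * h) l = coAd a g (coAd a h l)
    ext x
    rw [coAd_apply, coAd_apply, coAd_apply]
    rw [inr_snd_of_fst_eq_zero (fst_conj _ _ x)]
    simp only [Units.val_mul, mul_inv_rev, Units.val_mul]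
    noncomm_ring

lemma smul_def (g : (Unitization F a)ˣ) (l : Module.Dual F a) : g • l = coAd a g l := rfl

end Stmt19Aux
end

section
set_option linter.unusedSectionVars false

variable {F : Type*} [Field F] [Fintype F]
  {a : Type*} [NonUnitalRing a] [Module F a] [SMulCommClass F a a] [IsScalarTower F a a]

namespace Stmt19Aux

variable (hnil : ∃ n : ℕ, 0 < n ∧ ∀ f : Fin n → a,
      (List.ofFn (fun i => (inr (f i) : Unitization F a))).prod = 0)
variable {p : Submodule F a} (hpmul : ∀ x ∈ p, ∀ y ∈ p, x * y ∈ p)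
variable (lam : Module.Dual F a)

lemma val_eq_one_add {u : (Unitization F a)ˣ} (h1 : fst (u : Unitization F a) = 1) :
    (u : Unitization F a) = 1 + inr (snd (u : Unitization F a)) := by
  conv_lhs => rw [← inl_fst_add_inr_snd_eq (u : Unitization F a)]
  rw [h1, inl_one]

/-- The bilinear form `B(v, x) = λ(vx - xv)`. -/
noncomputable def Bform : a →ₗ[F] a →ₗ[F] F :=
  LinearMap.mk₂ F (fun v x => lam (v * x - x * v))
    (fun v v' x => by
      rw [add_mul, mul_add, show v * x + v' * x - (x * v + x * v')
        = (v * x - x * v) + (v' * x - x * v') by abel, map_add])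
    (fun c v x => by
      rw [smul_mul_assoc, mul_smul_comm, ← smul_sub, map_smul])
    (fun v x x' => by
      rw [mul_add, add_mul, show v * x + v * x' - (x * v + x' * v)
        = (v * x - x * v) + (v * x' - x' * v) by abel, map_add])
    (fun c v x => by
      rw [smul_mul_assoc, mul_smul_comm, ← smul_sub, map_smul])

@[simp] lemma Bform_apply (v x : a) : Bform lam v x = lam (v * x - x * v) := rfl

/-- The radical of the form `B`. -/
noncomputable def radB : Submodule F a := LinearMap.ker (Bform lam).flip

lemma mem_radB_iff {y : a} : y ∈ radB lam ↔ ∀ x : a, lam (x * y - y * x) = 0 := by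
  simp [radB, LinearMap.mem_ker, LinearMap.ext_iff]

/-- Stabilizer characterization. -/
lemma stab_iff {g : (Unitization F a)ˣ} (h1 : fst (g : Unitization F a) = 1) :
    coAd a g lam = lam ↔ snd (g : Unitization F a) ∈ radB lam := by
  -- Step B/C preparation: the two-sided condition
  have key : ∀ X : Unitization F a,
      lam (snd (X * (g : Unitization F a))) - lam (snd ((g : Unitization F a) * X))
        = lam (snd X * snd (g : Unitization F a) - snd (g : Unitization F a) * snd X) := by
    intro X
    rw [← map_sub]
    congr 1
    rw [snd_mul, snd_mul]
    abel
  constructor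
  · intro hstab
    rw [mem_radB_iff]
    intro x
    -- use invariance of lam ∘ snd under conjugation on inr x
    have hx : ∀ z : a, lam (snd (((g⁻¹ : (Unitization F a)ˣ) : Unitization F a) * inr z * (g : Unitization F a)))
        = lam z := by
      intro z
      have := congrArg (fun l : Module.Dual F a => l z) hstab
      simpa [coAd_apply] using this
    -- derive lam (snd (X * g)) = lam (snd (g * X)) for X = inr x
    have h2 : lam (snd ((inr x : Unitization F a) * (g : Unitization F a)))
        = lam (snd ((g : Unitization F a) * inr x)) := by
      have h3 := hx (snd ((g : Unitization F a) * inr x))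
      rw [inr_snd_of_fst_eq_zero (by simp)] at h3
      have e : ((g⁻¹ : (Unitization F a)ˣ) : Unitization F a) *
          ((g : Unitization F a) * inr x) * (g : Unitization F a)
          = (inr x : Unitization F a) * (g : Unitization F a) := by
        rw [← mul_assoc, Units.inv_mul, one_mul]
      rw [e] at h3
      exact h3
    have := key (inr x)
    rw [h2, sub_self] at this
    have := this.symm
    simpa using this
  · intro hy
    ext x
    rw [coAd_apply]
    -- suffices conjugation invariance
    have comm : ∀ X : Unitization F a, lam (snd (X * (g : Unitization F a)))
        = lam (snd ((g : Unitization F a) * X)) := by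
      intro X
      have := key X
      rw [mem_radB_iff] at hy
      rw [hy (snd X)] at this
      exact sub_eq_zero.mp this
    have h4 := comm (((g⁻¹ : (Unitization F a)ˣ) : Unitization F a) * inr x)
    calc lam (snd (((g⁻¹ : (Unitization F a)ˣ) : Unitization F a) * inr x * (g : Unitization F a)))
        = lam (snd ((g : Unitization F a) * (((g⁻¹ : (Unitization F a)ˣ) : Unitization F a) * inr x))) := h4
      _ = lam x := by rw [← mul_assoc, Units.mul_inv, one_mul, snd_inr]

end Stmt19Aux
end

section
set_option linter.unusedSectionVars false

variable {F : Type*} [Field F] [Fintype F]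
  {a : Type*} [NonUnitalRing a] [Module F a] [SMulCommClass F a a] [IsScalarTower F a a]

namespace Stmt19Aux

variable (hnil : ∃ n : ℕ, 0 < n ∧ ∀ f : Fin n → a,
      (List.ofFn (fun i => (inr (f i) : Unitization F a))).prod = 0)
variable {p : Submodule F a} (hpmul : ∀ x ∈ p, ∀ y ∈ p, x * y ∈ p)
variable (lam : Module.Dual F a)

lemma Bform_skew (v w : a) : Bform lam v w = - Bform lam w v := by
  rw [Bform_apply, Bform_apply, ← map_neg, neg_sub]

lemma radB_le (hiso : ∀ x ∈ p, ∀ y ∈ p, lam (x * y - y * x) = 0)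
    (hmax : ∀ p' : Submodule F a,
      (∀ x ∈ p', ∀ y ∈ p', lam (x * y - y * x) = 0) → p ≤ p' → p' = p) :
    radB lam ≤ p := by
  have hsup : p ⊔ radB lam = p := by
    refine hmax _ ?_ le_sup_left
    intro x hx y hy
    rw [Submodule.mem_sup] at hx hy
    obtain ⟨x1, hx1, r1, hr1, rfl⟩ := hx
    obtain ⟨x2, hx2, r2, hr2, rfl⟩ := hy
    have hB : lam ((x1 + r1) * (x2 + r2) - (x2 + r2) * (x1 + r1))
        = Bform lam (x1 + r1) (x2 + r2) := rfl
    rw [hB]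
    simp only [map_add, LinearMap.add_apply]
    rw [mem_radB_iff] at hr1 hr2
    have e1 : Bform lam x1 x2 = 0 := hiso _ hx1 _ hx2
    have e2 : Bform lam x1 r2 = 0 := hr2 x1
    have e3 : Bform lam r1 x2 = 0 := by rw [Bform_skew, show Bform lam x2 r1 = 0 from hr1 x2, neg_zero]
    have e4 : Bform lam r1 r2 = 0 := hr2 r1
    rw [e1, e2, e3, e4]
    simp
  rw [← hsup]; exact le_sup_right

lemma coAd_fixes (hp2 : ∀ x ∈ p, ∀ y ∈ p, lam (x * y) = 0) {u : (Unitization F a)ˣ}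
    (hu : u ∈ Pgrp hnil hpmul) : ∀ x ∈ p, coAd a u lam x = lam x := by
  intro x hx
  obtain ⟨h1', h2'⟩ := (Pgrp hnil hpmul).inv_mem hu
  obtain ⟨h1, h2⟩ := hu
  rw [coAd_apply, val_eq_one_add h1, val_eq_one_add h1']
  set y := snd (u : Unitization F a)
  set y' := snd ((u⁻¹ : (Unitization F a)ˣ) : Unitization F a)
  have hA1 : fst ((1 + inr y' : Unitization F a) * inr x) = 0 := by simp
  have hA2 : snd ((1 + inr y' : Unitization F a) * inr x) = x + y' * x := by
    rw [snd_mul]; simp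
  rw [snd_mul, hA1, hA2]
  simp only [fst_add, fst_one, fst_inr, add_zero, snd_add, snd_one, snd_inr, zero_add,
    zero_smul, one_smul, smul_zero]
  rw [add_mul]
  rw [map_add, map_add, map_add]
  rw [hp2 _ h2' _ hx, hp2 _ hx _ h2, hp2 _ (hpmul _ h2' _ hx) _ h2]
  simp

end Stmt19Aux
end

section
set_option linter.unusedSectionVars false

variable {F : Type*} [Field F] [Fintype F]
  {a : Type*} [NonUnitalRing a] [Module F a] [SMulCommClass F a a] [IsScalarTower F a a]

namespace Stmt19Aux

variable {p : Submodule F a} (lam : Module.Dual F a)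

lemma dim_identity [FiniteDimensional F a]
    (hiso : ∀ x ∈ p, ∀ y ∈ p, lam (x * y - y * x) = 0)
    (hmax : ∀ p' : Submodule F a,
      (∀ x ∈ p', ∀ y ∈ p', lam (x * y - y * x) = 0) → p ≤ p' → p' = p) :
    Module.finrank F a + Module.finrank F (radB lam) = 2 * Module.finrank F p := by
  classical
  set B := Bform lam with hBdef
  set C : p →ₗ[F] Module.Dual F a := B.flip ∘ₗ p.subtype with hCdef
  set D : a →ₗ[F] Module.Dual F p := (p.subtype).dualMap ∘ₗ B with hDdef
  have hD : D = C.dualMap ∘ₗ (Module.Dual.eval F a) := by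
    ext v x
    rfl
  have hkerC : LinearMap.ker C = (radB lam).comap p.subtype := by
    ext x
    simp [hCdef, hBdef, radB, LinearMap.mem_ker]
  have hBvv : ∀ v : a, B v v = 0 := fun v => by
    rw [hBdef, Bform_apply, sub_self, map_zero]
  have hkerD : LinearMap.ker D = p := by
    ext v
    simp only [LinearMap.mem_ker, hDdef, LinearMap.comp_apply]
    constructor
    · intro h
      have hBv : ∀ x ∈ p, B v x = 0 := by
        intro x hx
        have := congrArg (fun f : Module.Dual F p => f ⟨x, hx⟩) h
        simpa using this
      have hxv : ∀ x ∈ p, B x v = 0 := by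
        intro x hx
        rw [hBdef, Bform_skew, ← hBdef, hBv x hx, neg_zero]
      have hsup : p ⊔ (F ∙ v) = p := by
        refine hmax _ ?_ le_sup_left
        intro z hz w hw
        rw [Submodule.mem_sup] at hz hw
        obtain ⟨x1, hx1, w1, hw1, rfl⟩ := hz
        obtain ⟨x2, hx2, w2, hw2, rfl⟩ := hw
        rw [Submodule.mem_span_singleton] at hw1 hw2
        obtain ⟨c1, rfl⟩ := hw1
        obtain ⟨c2, rfl⟩ := hw2
        have hBe : lam ((x1 + c1 • v) * (x2 + c2 • v) - (x2 + c2 • v) * (x1 + c1 • v))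
            = B (x1 + c1 • v) (x2 + c2 • v) := rfl
        rw [hBe]
        simp only [map_add, map_smul, LinearMap.add_apply, LinearMap.smul_apply]
        rw [show (B x1) x2 = 0 from hiso _ hx1 _ hx2, hBv x2 hx2, hxv x1 hx1, hBvv v]
        simp
      have : v ∈ p ⊔ (F ∙ v) :=
        Submodule.mem_sup_right (Submodule.mem_span_singleton_self v)
      rwa [hsup] at this
    · intro hv
      ext x
      have := hiso v hv x.1 x.2
      simpa [hBdef] using this
  have h1 := LinearMap.finrank_range_add_finrank_ker C
  rw [hkerC] at h1
  have e1 := (Submodule.comapSubtypeEquivOfLe (radB_le lam hiso hmax)).finrank_eq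
  have h2 := LinearMap.finrank_range_add_finrank_ker D
  rw [hkerD] at h2
  have h3 : Module.finrank F (LinearMap.range D) = Module.finrank F (LinearMap.range C) := by
    rw [hD]
    have hsurj : LinearMap.range (Module.Dual.eval F a) = ⊤ :=
      LinearMap.range_eq_top.mpr (Module.evalEquiv F a).surjective
    rw [LinearMap.range_comp_of_range_eq_top _ hsurj]
    exact LinearMap.finrank_range_dualMap_eq_finrank_range C
  have hfp : Module.finrank F (↥p) = Module.finrank F p := rfl
  omega

end Stmt19Aux
end

section
set_option linter.unusedSectionVars false

variable {F : Type*} [Field F] [Fintype F]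
  {a : Type*} [NonUnitalRing a] [Module F a] [SMulCommClass F a a] [IsScalarTower F a a]

namespace Stmt19Aux

lemma card_module (V : Type*) [AddCommGroup V] [Module F V] [FiniteDimensional F V] :
    Nat.card V = Fintype.card F ^ Module.finrank F V := by
  have : Finite V := Module.finite_of_finite F
  cases nonempty_fintype V
  rw [Nat.card_eq_fintype_card]
  exact card_eq_pow_finrank (K := F)

variable (hnil : ∃ n : ℕ, 0 < n ∧ ∀ f : Fin n → a,
      (List.ofFn (fun i => (inr (f i) : Unitization F a))).prod = 0)
variable {p : Submodule F a} (hpmul : ∀ x ∈ p, ∀ y ∈ p, x * y ∈ p)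
variable (lam : Module.Dual F a)

lemma units_eq_of_snd_eq {g h : (Unitization F a)ˣ} (hg : fst (g : Unitization F a) = 1)
    (hh : fst (h : Unitization F a) = 1)
    (hs : snd (g : Unitization F a) = snd (h : Unitization F a)) : g = h := by
  apply Units.ext
  rw [val_eq_one_add hg, val_eq_one_add hh, hs]

include hnil in
lemma card_Ggrp : Nat.card (Ggrp (F := F) (a := a)) = Nat.card a := by
  refine Nat.card_eq_of_bijective (fun g => snd ((g : (Unitization F a)ˣ) : Unitization F a))
    ⟨?_, ?_⟩
  · rintro ⟨g, hg⟩ ⟨h, hh⟩ hs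
    exact Subtype.ext (units_eq_of_snd_eq hg hh hs)
  · intro x
    refine ⟨⟨mkUnit hnil x, ?_⟩, ?_⟩
    · show fst ((mkUnit hnil x : (Unitization F a)ˣ) : Unitization F a) = 1
      rw [mkUnit_val]; simp
    · show snd ((mkUnit hnil x : (Unitization F a)ˣ) : Unitization F a) = x
      rw [mkUnit_val]; simp

include hnil in
lemma card_Pgrp : Nat.card (Pgrp hnil hpmul) = Nat.card p := by
  refine Nat.card_eq_of_bijective
    (fun g => (⟨snd ((g : (Unitization F a)ˣ) : Unitization F a), g.2.2⟩ : p)) ⟨?_, ?_⟩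
  · rintro ⟨g, hg⟩ ⟨h, hh⟩ hs
    exact Subtype.ext (units_eq_of_snd_eq hg.1 hh.1 (congrArg Subtype.val hs))
  · rintro ⟨x, hx⟩
    have hmem : mkUnit hnil x ∈ Pgrp hnil hpmul := by
      constructor
      · show fst ((mkUnit hnil x : (Unitization F a)ˣ) : Unitization F a) = 1
        rw [mkUnit_val]; simp
      · show snd ((mkUnit hnil x : (Unitization F a)ˣ) : Unitization F a) ∈ p
        rw [mkUnit_val]; simpa using hx
    refine ⟨⟨mkUnit hnil x, hmem⟩, ?_⟩
    apply Subtype.ext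
    show snd ((mkUnit hnil x : (Unitization F a)ˣ) : Unitization F a) = x
    rw [mkUnit_val]; simp

include hnil in
lemma card_stab_G :
    Nat.card (MulAction.stabilizer (Ggrp (F := F) (a := a)) lam) = Nat.card (radB lam) := by
  refine Nat.card_eq_of_bijective (fun g =>
    (⟨snd (((g : Ggrp (F := F) (a := a)) : (Unitization F a)ˣ) : Unitization F a),
      (stab_iff lam g.1.2).mp g.2⟩ : radB lam)) ⟨?_, ?_⟩
  · rintro ⟨⟨g, hg⟩, hg2⟩ ⟨⟨h, hh⟩, hh2⟩ hs
    exact Subtype.ext (Subtype.ext (units_eq_of_snd_eq hg hh (congrArg Subtype.val hs)))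
  · rintro ⟨y, hy⟩
    have h1 : fst ((mkUnit hnil y : (Unitization F a)ˣ) : Unitization F a) = 1 := by
      rw [mkUnit_val]; simp
    have h2 : snd ((mkUnit hnil y : (Unitization F a)ˣ) : Unitization F a) = y := by
      rw [mkUnit_val]; simp
    have hstab : (⟨mkUnit hnil y, h1⟩ : Ggrp (F := F) (a := a)) • lam = lam := by
      show coAd a (mkUnit hnil y) lam = lam
      rw [stab_iff lam h1, h2]
      exact hy
    exact ⟨⟨⟨mkUnit hnil y, h1⟩, hstab⟩, Subtype.ext h2⟩

include hnil in
lemma card_stab_P (hrad : radB lam ≤ p) :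
    Nat.card (MulAction.stabilizer (Pgrp hnil hpmul) lam) = Nat.card (radB lam) := by
  refine Nat.card_eq_of_bijective (fun g =>
    (⟨snd (((g : Pgrp hnil hpmul) : (Unitization F a)ˣ) : Unitization F a),
      (stab_iff lam g.1.2.1).mp g.2⟩ : radB lam)) ⟨?_, ?_⟩
  · rintro ⟨⟨g, hg⟩, hg2⟩ ⟨⟨h, hh⟩, hh2⟩ hs
    exact Subtype.ext (Subtype.ext (units_eq_of_snd_eq hg.1 hh.1 (congrArg Subtype.val hs)))
  · rintro ⟨y, hy⟩
    have h1 : fst ((mkUnit hnil y : (Unitization F a)ˣ) : Unitization F a) = 1 := by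
      rw [mkUnit_val]; simp
    have h2 : snd ((mkUnit hnil y : (Unitization F a)ˣ) : Unitization F a) = y := by
      rw [mkUnit_val]; simp
    have hmem : mkUnit hnil y ∈ Pgrp hnil hpmul := ⟨h1, by rw [h2]; exact hrad hy⟩
    have hstab : (⟨mkUnit hnil y, hmem⟩ : Pgrp hnil hpmul) • lam = lam := by
      show coAd a (mkUnit hnil y) lam = lam
      rw [stab_iff lam h1, h2]
      exact hy
    exact ⟨⟨⟨mkUnit hnil y, hmem⟩, hstab⟩, Subtype.ext h2⟩

lemma orbit_G_eq :
    MulAction.orbit (Ggrp (F := F) (a := a)) lam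
      = {mu : Module.Dual F a |
          ∃ g : (Unitization F a)ˣ, (∃ x : a, (g : Unitization F a) = 1 + inr x) ∧
            coAd a g lam = mu} := by
  ext mu
  constructor
  · rintro ⟨⟨g, hg⟩, rfl⟩
    exact ⟨g, mem_Ggrp_iff.mp hg, rfl⟩
  · rintro ⟨g, hg, rfl⟩
    exact ⟨⟨g, mem_Ggrp_iff.mpr hg⟩, rfl⟩

lemma orbit_P_eq :
    MulAction.orbit (Pgrp hnil hpmul) lam
      = {mu : Module.Dual F a |
          ∃ u : (Unitization F a)ˣ, (∃ x ∈ p, (u : Unitization F a) = 1 + inr x) ∧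
            coAd a u lam = mu} := by
  ext mu
  constructor
  · rintro ⟨⟨g, hg⟩, rfl⟩
    exact ⟨g, (mem_Pgrp_iff hnil hpmul).mp hg, rfl⟩
  · rintro ⟨g, hg, rfl⟩
    exact ⟨⟨g, (mem_Pgrp_iff hnil hpmul).mpr hg⟩, rfl⟩

/-- The set `L(λ)` is in bijection with the dual annihilator of `p`. -/
noncomputable def LEquiv :
    {mu : Module.Dual F a | ∀ x ∈ p, mu x = lam x} ≃ p.dualAnnihilator where
  toFun mu := ⟨mu.1 - lam, by
    rw [Submodule.mem_dualAnnihilator]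
    intro w hw
    have := mu.2 w hw
    simp [this]⟩
  invFun nu := ⟨nu.1 + lam, by
    intro x hx
    have := (Submodule.mem_dualAnnihilator _).mp nu.2 x hx
    simp [this]⟩
  left_inv mu := by apply Subtype.ext; simp
  right_inv nu := by apply Subtype.ext; simp

lemma card_L [FiniteDimensional F a] :
    Nat.card {mu : Module.Dual F a | ∀ x ∈ p, mu x = lam x} * Fintype.card F ^ Module.finrank F p
      = Fintype.card F ^ Module.finrank F a := by
  rw [Nat.card_congr (LEquiv lam), card_module (F := F) p.dualAnnihilator,
    ← (Subspace.quotEquivAnnihilator p).finrank_eq, ← pow_add,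
    Submodule.finrank_quotient_add_finrank]

end Stmt19Aux
end


open Stmt19Aux in
/-- For a finite-dimensional nilpotent associative algebra `g` over `F_q`, `λ ∈ g*`,
`p` an associative polarization of `λ`, `P = 1 + p`, and
`L(λ) = {μ ∈ g* | μ|_p = λ|_p}`: `L(λ)` equals the `P`-orbit of `λ` under the coadjoint
action, it is contained in the `G`-coadjoint orbit of `λ`, and `|L(λ)|²` equals the
cardinality of the coadjoint orbit of `λ`. -/
theorem stmt19 [FiniteDimensional F a]
    (hnil : ∃ n : ℕ, 0 < n ∧ ∀ f : Fin n → a,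
      (List.ofFn (fun i => (inr (f i) : Unitization F a))).prod = 0)
    (lam : Module.Dual F a)
    (p : Submodule F a)
    (hpmul : ∀ x ∈ p, ∀ y ∈ p, x * y ∈ p)
    (hp2 : ∀ x ∈ p, ∀ y ∈ p, lam (x * y) = 0)
    (hiso : ∀ x ∈ p, ∀ y ∈ p, lam (x * y - y * x) = 0)
    (hmax : ∀ p' : Submodule F a,
      (∀ x ∈ p', ∀ y ∈ p', lam (x * y - y * x) = 0) → p ≤ p' → p' = p) :
    {mu : Module.Dual F a | ∀ x ∈ p, mu x = lam x}
        = {mu : Module.Dual F a |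
            ∃ u : (Unitization F a)ˣ, (∃ x ∈ p, (u : Unitization F a) = 1 + inr x) ∧
              coAd a u lam = mu} ∧
    {mu : Module.Dual F a | ∀ x ∈ p, mu x = lam x}
        ⊆ {mu : Module.Dual F a |
            ∃ g : (Unitization F a)ˣ, (∃ x : a, (g : Unitization F a) = 1 + inr x) ∧
              coAd a g lam = mu} ∧
    (Nat.card {mu : Module.Dual F a | ∀ x ∈ p, mu x = lam x}) ^ 2
      = Nat.card {mu : Module.Dual F a |
          ∃ g : (Unitization F a)ˣ, (∃ x : a, (g : Unitization F a) = 1 + inr x) ∧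
            coAd a g lam = mu} := by
  classical
  have hrad : radB lam ≤ p := radB_le lam hiso hmax
  haveI : Finite a := Module.finite_of_finite F
  haveI : Finite (Module.Dual F a) := Module.finite_of_finite F
  set q := Fintype.card F with hqdef
  have hq : 0 < q := Fintype.card_pos
  set da := Module.finrank F a with hda
  set dp := Module.finrank F p with hdp
  set dr := Module.finrank F (radB lam) with hdr
  have hdim : da + dr = 2 * dp := dim_identity lam hiso hmax
  have hcardP : Nat.card (Pgrp hnil hpmul) = q ^ dp := by
    rw [card_Pgrp hnil hpmul, card_module (F := F) p]
  have hcardG : Nat.card (Ggrp (F := F) (a := a)) = q ^ da := by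
    rw [card_Ggrp hnil, card_module (F := F) a]
  have hstabP : Nat.card (MulAction.stabilizer (Pgrp hnil hpmul) lam) = q ^ dr := by
    rw [card_stab_P hnil hpmul lam hrad, card_module (F := F) (radB lam)]
  have hstabG : Nat.card (MulAction.stabilizer (Ggrp (F := F) (a := a)) lam) = q ^ dr := by
    rw [card_stab_G hnil lam, card_module (F := F) (radB lam)]
  have hOSP : Nat.card (MulAction.orbit (Pgrp hnil hpmul) lam) * q ^ dr = q ^ dp := by
    rw [← hstabP, ← hcardP, ← Nat.card_prod]
    exact Nat.card_congr (MulAction.orbitProdStabilizerEquivGroup _ lam)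
  have hOSG : Nat.card (MulAction.orbit (Ggrp (F := F) (a := a)) lam) * q ^ dr = q ^ da := by
    rw [← hstabG, ← hcardG, ← Nat.card_prod]
    exact Nat.card_congr (MulAction.orbitProdStabilizerEquivGroup _ lam)
  have hL : Nat.card {mu : Module.Dual F a | ∀ x ∈ p, mu x = lam x} * q ^ dp = q ^ da :=
    card_L lam
  set cardL := Nat.card {mu : Module.Dual F a | ∀ x ∈ p, mu x = lam x} with hcL
  set cardOP := Nat.card (MulAction.orbit (Pgrp hnil hpmul) lam) with hcOP
  set cardOG := Nat.card (MulAction.orbit (Ggrp (F := F) (a := a)) lam) with hcOG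
  have hLP : cardL = cardOP := by
    have e : cardL * q ^ (dp + dr) = cardOP * q ^ (dp + dr) := by
      calc cardL * q ^ (dp + dr) = (cardL * q ^ dp) * q ^ dr := by rw [pow_add, mul_assoc]
        _ = q ^ (da + dr) := by rw [hL, pow_add]
        _ = q ^ dp * q ^ dp := by rw [hdim, two_mul, pow_add]
        _ = (cardOP * q ^ dr) * q ^ dp := by rw [hOSP]
        _ = cardOP * q ^ (dp + dr) := by rw [pow_add]; ring
    exact Nat.eq_of_mul_eq_mul_right (pow_pos hq _) e
  have hL2G : cardL ^ 2 = cardOG := by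
    have e : cardL ^ 2 * q ^ (da + dr) = cardOG * q ^ (da + dr) := by
      calc cardL ^ 2 * q ^ (da + dr) = (cardL * q ^ dp) ^ 2 := by
            rw [hdim, two_mul, pow_add, mul_pow]; ring
        _ = q ^ da * q ^ da := by rw [hL, sq]
        _ = (cardOG * q ^ dr) * q ^ da := by rw [hOSG]
        _ = cardOG * q ^ (da + dr) := by rw [pow_add]; ring
    exact Nat.eq_of_mul_eq_mul_right (pow_pos hq _) e
  have horbsub : MulAction.orbit (Pgrp hnil hpmul) lam
      ⊆ {mu : Module.Dual F a | ∀ x ∈ p, mu x = lam x} := by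
    rintro mu ⟨u, rfl⟩
    intro x hx
    exact coAd_fixes hnil hpmul lam hp2 u.2 x hx
  have hpart1 : {mu : Module.Dual F a | ∀ x ∈ p, mu x = lam x}
      = MulAction.orbit (Pgrp hnil hpmul) lam := by
    refine (Set.eq_of_subset_of_ncard_le horbsub ?_ (Set.toFinite _)).symm
    rw [← Nat.card_coe_set_eq, ← Nat.card_coe_set_eq, ← hcL, ← hcOP]
    exact le_of_eq hLP
  refine ⟨hpart1.trans (orbit_P_eq hnil hpmul lam), ?_, ?_⟩
  · intro mu hmu
    rw [hpart1.trans (orbit_P_eq hnil hpmul lam)] at hmu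
    obtain ⟨u, ⟨x, hx, hux⟩, h⟩ := hmu
    exact ⟨u, ⟨x, hux⟩, h⟩
  · rw [← orbit_G_eq lam]
    exact hL2G
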